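/- (Theorem 2) Let (A, B, u_O, u_L) be a finite two-player bimatrix game that is constant-sum, i.e. u_O(a,b) + u_L(a,b) = C for a fixed constant C and all a ∈ A, b ∈ B, and let V be its Stackelberg value. Let T ≥ 1, let a^1, …, a^T ∈ A be any sequence of optimizer actions, and let p_1, …, p_T ∈ Δ(B) be any sequence of mixed plays of the learner. Set R = max_{b ∈ B} Σ_{t=1}^T u_L(a^t, b) − Σ_{t=1}^T u_L(a^t, p_t) (the learner's regret). Then the optimizer's total utility satisfies Σ_{t=1}^T u_O(a^t, p_t) ≤ V·T + R. -/

import Mathlib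

open Finset

/-- A probability distribution (mixed strategy) on a finite type. -/
def IsDist {X : Type*} [Fintype X] (f : X → ℝ) : Prop :=
  (∀ x, 0 ≤ f x) ∧ ∑ x, f x = 1

/-- The set of optimizer utilities `u_O(α, b)` over pairs where `b` is a best
response to `α`; the Stackelberg value is its greatest element. -/
def StackSet {A B : Type*} [Fintype A] [Fintype B] (uO uL : A → B → ℝ) : Set ℝ :=
  {v | ∃ (α : A → ℝ) (b : B), IsDist α ∧
    (∀ b' : B, ∑ a, α a * uL a b' ≤ ∑ a, α a * uL a b) ∧
    v = ∑ a, α a * uO a b}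

/-- Theorem 2: in a constant-sum game with Stackelberg value `V`, against a
learner whose plays have regret `R` the optimizer's total utility is at most
`V·T + R`. -/
theorem stmt4 {A B : Type*} [Fintype A] [Fintype B] [Nonempty A] [Nonempty B]
    (uO uL : A → B → ℝ) (C : ℝ) (hC : ∀ a b, uO a b + uL a b = C)
    (V : ℝ) (hV : IsGreatest (StackSet uO uL) V)
    (T : ℕ) (hT : 1 ≤ T) (a : Fin T → A)
    (p : Fin T → B → ℝ) (hp : ∀ t, IsDist (p t))
    (R : ℝ)
    (hR : R = (univ.sup' univ_nonempty fun b : B => ∑ t : Fin T, uL (a t) b)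
          - ∑ t : Fin T, ∑ b, p t b * uL (a t) b) :
    ∑ t : Fin T, ∑ b, p t b * uO (a t) b ≤ V * T + R := by
  classical
  have hT0 : (0:ℝ) < (T:ℝ) := by exact_mod_cast hT
  set M := (univ.sup' univ_nonempty fun b : B => ∑ t : Fin T, uL (a t) b) with hM
  -- empirical distribution
  set α : A → ℝ := fun x => (∑ t : Fin T, if a t = x then (1:ℝ) else 0) / T with hα
  have key : ∀ f : A → ℝ, ∑ x, α x * f x = (∑ t : Fin T, f (a t)) / T := by
    intro f
    have : ∑ x, (∑ t : Fin T, if a t = x then (1:ℝ) else 0) * f x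
        = ∑ t : Fin T, f (a t) := by
      simp_rw [Finset.sum_mul]
      rw [Finset.sum_comm]
      simp [ite_mul]
    simp only [hα, div_mul_eq_mul_div, ← Finset.sum_div, this]
  have hαdist : IsDist α := by
    constructor
    · intro x
      apply div_nonneg _ hT0.le
      exact Finset.sum_nonneg fun t _ => by positivity
    · have h := key (fun _ => (1:ℝ))
      simp only [mul_one] at h
      rw [h]
      simp [div_eq_one_iff_eq hT0.ne']
  obtain ⟨b, -, hb⟩ := Finset.exists_mem_eq_sup' (univ_nonempty (α := B))
      (fun b : B => ∑ t : Fin T, uL (a t) b)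
  have hbr : ∀ b' : B, ∑ x, α x * uL x b' ≤ ∑ x, α x * uL x b := by
    intro b'
    rw [key, key]
    have hle' : ∑ t : Fin T, uL (a t) b' ≤ ∑ t : Fin T, uL (a t) b := by
      rw [← hb]
      exact Finset.le_sup' (fun b : B => ∑ t : Fin T, uL (a t) b) (Finset.mem_univ b')
    gcongr
  have hmem : (∑ x, α x * uO x b) ∈ StackSet uO uL := ⟨α, b, hαdist, hbr, rfl⟩
  have hle : ∑ x, α x * uO x b ≤ V := hV.2 hmem
  have hval : ∑ x, α x * uO x b = C - M / T := by
    rw [key]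
    have hsum : ∑ t : Fin T, uO (a t) b = T * C - ∑ t : Fin T, uL (a t) b := by
      have h1 : ∀ t : Fin T, uO (a t) b = C - uL (a t) b := fun t => by
        have := hC (a t) b; linarith
      simp [h1, Finset.sum_sub_distrib, mul_comm]
    rw [hsum, show (∑ t : Fin T, uL (a t) b) = M from hb ▸ hM.symm ▸ rfl]
    field_simp
  -- rewrite LHS
  have hLHS : ∑ t : Fin T, ∑ x, p t x * uO (a t) x
      = T * C - ∑ t : Fin T, ∑ x, p t x * uL (a t) x := by
    have : ∀ t : Fin T, ∑ x, p t x * uO (a t) x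
        = C - ∑ x, p t x * uL (a t) x := by
      intro t
      have h1 : ∀ x, p t x * uO (a t) x = p t x * C - p t x * uL (a t) x := by
        intro x
        have hx : uO (a t) x = C - uL (a t) x := by have := hC (a t) x; linarith
        rw [hx]; ring
      simp only [h1, Finset.sum_sub_distrib, ← Finset.sum_mul, (hp t).2, one_mul]
    simp only [this, Finset.sum_sub_distrib, Finset.sum_const, card_univ,
      Fintype.card_fin, nsmul_eq_mul]
  have hMV : T * C - M ≤ V * T := by
    have : C - M / T ≤ V := hval ▸ hle
    have h2 := mul_le_mul_of_nonneg_right this hT0.le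
    calc T * C - M = (C - M / T) * T := by field_simp
      _ ≤ V * T := h2
  rw [hLHS, hR]
  linarith
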